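/- Let n ≥ 3. Then the number of permutations p of {1,…,n} in which the entry p_{n−1} has exactly one child in the minmax tree T^m_p is exactly 2·n!/3. -/

import Mathlib

/-- Binary trees with natural-number labels, used to model minmax trees of
permutations. -/
inductive BTree where
  | nil : BTree
  | node : ℕ → BTree → BTree → BTree
deriving DecidableEq, Repr

namespace BTree

/-- The label of the root (if any). -/
def rootVal : BTree → Option ℕ
  | .nil => none
  | .node v _ _ => some v

/-- Whether the value `x` occurs as a label in the tree. -/
def memB : BTree → ℕ → Bool
  | .nil, _ => false
  | .node v l r, x => (x == v) || memB l x || memB r x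

/-- The number of children of the (unique, for permutations) node labelled `x`. -/
def numChildren : BTree → ℕ → ℕ
  | .nil, _ => 0
  | .node v l r, x =>
      if x = v then (if l = .nil then 0 else 1) + (if r = .nil then 0 else 1)
      else numChildren l x + numChildren r x

/-- `x` is a leaf of the tree: it occurs in the tree and has no children. -/
def IsLeaf (t : BTree) (x : ℕ) : Prop := t.memB x = true ∧ t.numChildren x = 0

instance (t : BTree) (x : ℕ) : Decidable (t.IsLeaf x) := by unfold IsLeaf; infer_instance

/-- `childB t x y = true` iff `x` is a child of `y` in `t`, i.e. `x` is the root of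
the left or the right subtree hanging from `y`. -/
def childB : BTree → ℕ → ℕ → Bool
  | .nil, _, _ => false
  | .node v l r, x, y =>
      ((y == v) && (l.rootVal == some x || r.rootVal == some x))
      || childB l x y || childB r x y

/-- `ancB t x y = true` iff `x` is a (strict) ancestor of `y` in `t`, i.e. `y` lies
in a subtree hanging from `x`. -/
def ancB : BTree → ℕ → ℕ → Bool
  | .nil, _, _ => false
  | .node v l r, x, y =>
      ((x == v) && (memB l y || memB r y)) || ancB l x y || ancB r x y

end BTree

/-- `x` is the leftmost-eligible extreme letter of `l`: the minimum or the maximum. -/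
def isExtreme (l : List ℕ) (x : ℕ) : Bool :=
  (l.min? == some x) || (l.max? == some x)

/-- Fuelled construction of the minmax tree of a list of distinct naturals:
split the list as `u ++ [m] ++ v` where `m` is the leftmost of the minimum and
maximum letters, put `m` at the root and recurse on `u` (left) and `v` (right). -/
def mmAux : ℕ → List ℕ → BTree
  | 0, _ => .nil
  | fuel+1, l =>
    if l.isEmpty then .nil
    else
      let k := l.findIdx (isExtreme l)
      .node (l.getD k 0) (mmAux fuel (l.take k)) (mmAux fuel (l.drop (k+1)))

/-- The minmax tree `T^m_p` of a word `l` (with distinct letters). -/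
def minmaxTree (l : List ℕ) : BTree := mmAux l.length l

/-- The word `p_1 p_2 … p_n` on the letters `{1,…,n}` associated to a permutation
`p` of `Fin n`. -/
def permList (n : ℕ) (p : Equiv.Perm (Fin n)) : List ℕ :=
  List.ofFn (fun i => (p i : ℕ) + 1)

/-- The `i`-th entry `p_i` (1-indexed) of the permutation `p`. -/
def entryAt (n : ℕ) (p : Equiv.Perm (Fin n)) (i : ℕ) : ℕ :=
  (permList n p).getD (i - 1) 0

section Aux

open BTree

lemma min?_spec {l : List ℕ} (h : l ≠ []) :
    ∃ m, l.min? = some m ∧ m ∈ l ∧ ∀ x ∈ l, m ≤ x := by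
  obtain ⟨a, t, rfl⟩ := List.exists_cons_of_ne_nil h
  have hs : (a :: t).min?.isSome := List.isSome_min?_of_mem List.mem_cons_self
  obtain ⟨m, hm⟩ := Option.isSome_iff_exists.mp hs
  have := List.min?_eq_some_iff.mp hm
  exact ⟨m, hm, this.1, this.2⟩

lemma max?_spec {l : List ℕ} (h : l ≠ []) :
    ∃ m, l.max? = some m ∧ m ∈ l ∧ ∀ x ∈ l, x ≤ m := by
  obtain ⟨a, t, rfl⟩ := List.exists_cons_of_ne_nil h
  have hs : (a :: t).max?.isSome := List.isSome_max?_of_mem List.mem_cons_self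
  obtain ⟨m, hm⟩ := Option.isSome_iff_exists.mp hs
  have := List.max?_eq_some_iff.mp hm
  exact ⟨m, hm, this.1, this.2⟩

lemma findIdx_lt {l : List ℕ} (h : l ≠ []) :
    l.findIdx (isExtreme l) < l.length := by
  apply List.findIdx_lt_length_of_exists
  obtain ⟨m, hm, hmem, _⟩ := min?_spec h
  exact ⟨m, hmem, by simp [isExtreme, hm]⟩

lemma mmAux_nil (f : ℕ) : mmAux f [] = .nil := by cases f <;> simp [mmAux]

lemma mmAux_congr : ∀ (f g : ℕ) (l : List ℕ), l.length ≤ f → l.length ≤ g →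
    mmAux f l = mmAux g l := by
  intro f
  induction f with
  | zero =>
    intro g l hf _
    have : l = [] := List.length_eq_zero_iff.mp (Nat.le_zero.mp hf)
    subst this; rw [mmAux_nil, mmAux_nil]
  | succ f ih =>
    intro g l hf hg
    rcases l with _ | ⟨a, t⟩
    · rw [mmAux_nil, mmAux_nil]
    cases g with
    | zero => simp at hg
    | succ g =>
      have hne : a :: t ≠ [] := by simp
      have hk := findIdx_lt hne
      rw [mmAux, mmAux]
      simp only [List.isEmpty_cons, Bool.false_eq_true, if_false]
      set l := a :: t
      set k := l.findIdx (isExtreme l) with hkdef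
      have h1 : (l.take k).length ≤ f := by
        rw [List.length_take]; omega
      have h2 : (l.drop (k+1)).length ≤ f := by
        rw [List.length_drop]; omega
      have h1g : (l.take k).length ≤ g := by
        rw [List.length_take]; omega
      have h2g : (l.drop (k+1)).length ≤ g := by
        rw [List.length_drop]; omega
      rw [ih g (l.take k) h1 h1g, ih g (l.drop (k+1)) h2 h2g]

lemma mmAux_eq {f : ℕ} {l : List ℕ} (h : l.length ≤ f) : mmAux f l = minmaxTree l :=
  mmAux_congr f l.length l h le_rfl

lemma minmaxTree_eq {l : List ℕ} (h : l ≠ []) :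
    minmaxTree l = .node (l.getD (l.findIdx (isExtreme l)) 0)
      (minmaxTree (l.take (l.findIdx (isExtreme l))))
      (minmaxTree (l.drop (l.findIdx (isExtreme l) + 1))) := by
  have hk := findIdx_lt h
  rcases l with _ | ⟨a, t⟩
  · simp at h
  rw [minmaxTree]
  simp only [List.length_cons]
  rw [mmAux]
  simp only [List.isEmpty_cons, Bool.false_eq_true, if_false]
  set l := a :: t with hldef
  set k := l.findIdx (isExtreme l)
  have hlen : l.length = t.length + 1 := by rw [hldef]; rfl
  rw [mmAux_eq (by rw [List.length_take]; omega),
      mmAux_eq (by rw [List.length_drop]; omega)]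

lemma minmaxTree_ne_nil {l : List ℕ} (h : l ≠ []) : minmaxTree l ≠ .nil := by
  rw [minmaxTree_eq h]; simp

lemma numChildren_not_mem : ∀ (N : ℕ) (l : List ℕ) (x : ℕ), l.length ≤ N → x ∉ l →
    (minmaxTree l).numChildren x = 0 := by
  intro N
  induction N with
  | zero =>
    intro l x hl _
    have : l = [] := List.length_eq_zero_iff.mp (Nat.le_zero.mp hl)
    subst this; rfl
  | succ N ih =>
    intro l x hl hx
    rcases eq_or_ne l [] with rfl | hne
    · rfl
    have hk := findIdx_lt hne
    rw [minmaxTree_eq hne]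
    set k := l.findIdx (isExtreme l)
    have hv : l.getD k 0 ∈ l := by
      rw [List.getD_eq_getElem l 0 hk]; exact List.getElem_mem hk
    have hxv : x ≠ l.getD k 0 := fun h => hx (h ▸ hv)
    rw [numChildren, if_neg hxv,
      ih _ x (by rw [List.length_take]; omega) (fun h => hx (List.mem_of_mem_take h)),
      ih _ x (by rw [List.length_drop]; omega) (fun h => hx (List.mem_of_mem_drop h))]

end Aux

lemma minmaxTree_nil : minmaxTree [] = BTree.nil := rfl
section Key
open BTree

lemma minmaxTree_pair_numChildren {b c : ℕ} (hbc : b ≠ c) :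
    (minmaxTree [b, c]).numChildren b = 1 := by
  have hex : isExtreme [b, c] b = true := by
    have h1 : ([b, c] : List ℕ).min? = some (min b c) := by
      simp [List.min?]
    have h2 : ([b, c] : List ℕ).max? = some (max b c) := by
      simp [List.max?]
    rcases le_total b c with h | h
    · simp [isExtreme, h1, min_eq_left h]
    · simp [isExtreme, h2, max_eq_left h]
  have hk : ([b, c] : List ℕ).findIdx (isExtreme [b, c]) = 0 := by
    rw [List.findIdx_cons, hex]; rfl
  rw [minmaxTree_eq (by simp), hk]
  have h2 : ([b, c] : List ℕ).drop 1 = [c] := rfl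
  simp only [List.getD, List.take_zero, h2]
  rw [numChildren]
  have : minmaxTree [c] ≠ .nil := minmaxTree_ne_nil (by simp)
  simp [minmaxTree_nil, this]

lemma key_lemma : ∀ (N : ℕ) (u : List ℕ), u.length ≤ N → ∀ a b c : ℕ,
    (u ++ [a, b, c]).Nodup →
    (minmaxTree (u ++ [a, b, c])).numChildren b =
      if min b c < a ∧ a < max b c then 2 else 1 := by
  intro N
  induction N using Nat.strong_induction_on with
  | _ N ih =>
  intro u hu a b c hnd
  set L := u ++ [a, b, c] with hLdef
  have hLlen : L.length = u.length + 3 := by simp [hLdef]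
  have hLne : L ≠ [] := by simp [hLdef]
  -- nodup consequences
  have hcons := List.nodup_append'.mp hnd
  have hbu : b ∉ u := fun h => (hcons.2.2 h) (by simp)
  have habc : a ≠ b ∧ a ≠ c ∧ b ≠ c := by
    have := hcons.2.1; simp at this; tauto
  -- min and max
  obtain ⟨m, hm, hmmem, hmle⟩ := min?_spec hLne
  obtain ⟨M, hM, hMmem, hMle⟩ := max?_spec hLne
  have hbL : b ∈ L := by simp [hLdef]
  have hcL : c ∈ L := by simp [hLdef]
  have haL : a ∈ L := by simp [hLdef]
  have hmM : m ≠ M := by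
    intro h
    have h1 : b = m := le_antisymm (h ▸ hMle b hbL) (hmle b hbL)
    have h2 : c = m := le_antisymm (h ▸ hMle c hcL) (hmle c hcL)
    exact habc.2.2 (h1.trans h2.symm)
  set k := L.findIdx (isExtreme L) with hkdef
  have hk : k < L.length := findIdx_lt hLne
  -- elements at the last three positions
  have ha3 : L[u.length]'(by omega) = a := by
    simp only [hLdef]
    rw [List.getElem_append_right (le_refl u.length)]; simp
  have hb3 : L[u.length + 1]'(by omega) = b := by
    simp only [hLdef]
    rw [List.getElem_append_right (by omega)]; simp
  have hc3 : L[u.length + 2]'(by omega) = c := by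
    simp only [hLdef]
    rw [List.getElem_append_right (by omega)]; simp
  -- before k: not extreme
  have hnotex : ∀ j (hj : j < k), L[j]'(by omega) ≠ m ∧ L[j]'(by omega) ≠ M := by
    intro j hj
    have := List.not_of_lt_findIdx hj
    simp only [isExtreme, hm, hM, Bool.or_eq_false_iff, beq_eq_false_iff_ne, ne_eq,
      Option.some.injEq] at this
    exact ⟨fun h => this.1 h.symm, fun h => this.2 h.symm⟩
  -- at k: extreme
  have hexk : m = L[k]'hk ∨ M = L[k]'hk := by
    have := List.findIdx_getElem (p := isExtreme L) (xs := L) (w := hk)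
    simp only [isExtreme, hm, hM, Bool.or_eq_true, beq_iff_eq, Option.some_inj] at this
    exact this
  -- index of m and M
  obtain ⟨jm, hjm, hjmval⟩ := List.getElem_of_mem hmmem
  obtain ⟨jM, hjM, hjMval⟩ := List.getElem_of_mem hMmem
  have hjmk : k ≤ jm := by
    by_contra h
    exact (hnotex jm (by omega)).1 hjmval
  have hjMk : k ≤ jM := by
    by_contra h
    exact (hnotex jM (by omega)).2 hjMval
  -- k is not the last position
  have hklast : k ≠ u.length + 2 := by
    intro hke
    have h1 : m = c := by
      have : jm = u.length + 2 := by omega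
      subst this; rw [← hjmval, hc3]
    have h2 : M = c := by
      have : jM = u.length + 2 := by omega
      subst this; rw [← hjMval, hc3]
    exact hmM (h1.trans h2.symm)
  rw [minmaxTree_eq hLne, ← hkdef]
  have hgd : L.getD k 0 = L[k]'hk := List.getD_eq_getElem L 0 hk
  rcases lt_or_ge k u.length with hku | hku
  · -- extreme inside u
    have hvu : L[k]'hk = u[k]'hku := by
      simp only [hLdef]
      rw [List.getElem_append_left hku]
    have hvb : L[k]'hk ≠ b := by
      rw [hvu]; intro h; exact hbu (h ▸ List.getElem_mem hku)
    have htake : L.take k = u.take k := by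
      rw [hLdef, List.take_append]
      simp [Nat.sub_eq_zero_of_le (le_of_lt hku)]
    have hdrop : L.drop (k + 1) = u.drop (k + 1) ++ [a, b, c] := by
      rw [hLdef, List.drop_append]
      simp [Nat.sub_eq_zero_of_le hku]
    have hbne : ¬ (b = L.getD k 0) := by
      rw [hgd, hvu]; intro h; exact hbu (h ▸ List.getElem_mem hku)
    have hnd' : (u.drop (k + 1) ++ [a, b, c]).Nodup := by
      refine List.Nodup.sublist ?_ hnd
      rw [hLdef]
      exact (List.drop_sublist (k+1) u).append_right [a, b, c]
    have hN1 : 1 ≤ N := by omega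
    rw [numChildren, if_neg hbne, htake, hdrop,
      numChildren_not_mem u.length (u.take k) b
        (by rw [List.length_take]; omega)
        (fun h => hbu (List.mem_of_mem_take h)),
      ih (N - 1) (by omega) (u.drop (k + 1)) (by rw [List.length_drop]; omega) a b c hnd']
    exact Nat.zero_add _
  rcases lt_or_ge k (u.length + 1) with hka | hka
  · -- k = u.length : extreme is a
    have hke : k = u.length := by omega
    have hva : L[k]'hk = a := by rw [← ha3]; congr 1
    have htake : L.take k = u := by
      rw [hLdef, hke, List.take_append]; simp
    have hdrop : L.drop (k + 1) = [b, c] := by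
      rw [hLdef, hke, List.drop_append]; simp
    have hcond : ¬(min b c < a ∧ a < max b c) := by
      rcases hexk with he | he
      · have h1 : a ≤ b := hva ▸ he ▸ hmle b hbL
        have h2 : a ≤ c := hva ▸ he ▸ hmle c hcL
        intro h; omega
      · have h1 : b ≤ a := hva ▸ he ▸ hMle b hbL
        have h2 : c ≤ a := hva ▸ he ▸ hMle c hcL
        intro h; omega
    rw [if_neg hcond, numChildren, hgd, hva, if_neg habc.1.symm, htake, hdrop,
      numChildren_not_mem u.length u b le_rfl hbu,
      minmaxTree_pair_numChildren habc.2.2]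
  · -- k = u.length + 1 : extreme is b
    have hke : k = u.length + 1 := by omega
    have hvb : L[k]'hk = b := by rw [← hb3]; congr 1
    have htake : L.take k = u ++ [a] := by
      rw [hLdef, hke, List.take_append]; simp
    have hdrop : L.drop (k + 1) = [c] := by
      rw [hLdef, hke, List.drop_append,
        List.drop_eq_nil_of_le (by omega), (by omega : u.length + 1 + 1 - u.length = 2)]
      rfl
    -- m and M are among b, c; a is strictly between
    have hmbc : m = b ∨ m = c := by
      have : jm = u.length + 1 ∨ jm = u.length + 2 := by omega
      rcases this with h | h
      · left; subst h; rw [← hjmval, hb3]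
      · right; subst h; rw [← hjmval, hc3]
    have hMbc : M = b ∨ M = c := by
      have : jM = u.length + 1 ∨ jM = u.length + 2 := by omega
      rcases this with h | h
      · left; subst h; rw [← hjMval, hb3]
      · right; subst h; rw [← hjMval, hc3]
    have hma : m ≠ a := by
      intro h
      exact (hnotex u.length (by omega)).1 (by rw [ha3, h])
    have hMa : M ≠ a := by
      intro h
      exact (hnotex u.length (by omega)).2 (by rw [ha3, h])
    have hm_a : m < a := lt_of_le_of_ne (hmle a haL) hma
    have ha_M : a < M := lt_of_le_of_ne (hMle a haL) (fun h => hMa h.symm)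
    have hcond : min b c < a ∧ a < max b c := by
      have hmb := hmle b hbL
      have hmc := hmle c hcL
      have hMb := hMle b hbL
      have hMc := hMle c hcL
      rcases hmbc with rfl | rfl <;> rcases hMbc with rfl | rfl <;> omega
    rw [if_pos hcond, numChildren, hgd, hvb, if_pos rfl, htake, hdrop]
    have h1 : minmaxTree (u ++ [a]) ≠ .nil := minmaxTree_ne_nil (by simp)
    have h2 : minmaxTree [c] ≠ .nil := minmaxTree_ne_nil (by simp)
    rw [if_neg h1, if_neg h2]

end Key
section Perm
open BTree

lemma list_decomp {l : List ℕ} {m : ℕ} (h : l.length = m + 3) :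
    l = l.take m ++ [l.getD m 0, l.getD (m + 1) 0, l.getD (m + 2) 0] := by
  have hd3 : (l.drop m).length = 3 := by rw [List.length_drop, h]; omega
  obtain ⟨x, y, z, hxyz⟩ := List.length_eq_three.mp hd3
  have e0 : l.getD m 0 = x := by
    have h0 : (l.drop m)[0]'(by omega) = x := by simp [hxyz]
    rw [List.getElem_drop] at h0
    rw [List.getD_eq_getElem _ _ (by omega)]
    simpa using h0
  have e1 : l.getD (m + 1) 0 = y := by
    have h0 : (l.drop m)[1]'(by omega) = y := by simp [hxyz]
    rw [List.getElem_drop] at h0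
    rw [List.getD_eq_getElem _ _ (by omega)]
    simpa using h0
  have e2 : l.getD (m + 2) 0 = z := by
    have h0 : (l.drop m)[2]'(by omega) = z := by simp [hxyz]
    rw [List.getElem_drop] at h0
    rw [List.getD_eq_getElem _ _ (by omega)]
    simpa using h0
  rw [e0, e1, e2, ← hxyz, List.take_append_drop]

/-- the median-first condition on the three values -/
def medP (a b c : ℕ) : Prop := min b c < a ∧ a < max b c

instance (a b c : ℕ) : Decidable (medP a b c) := by unfold medP; infer_instance

lemma exactly_one_med {x y z : ℕ} (hxy : x ≠ y) (hxz : x ≠ z) (hyz : y ≠ z) :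
    ((if medP x y z then 1 else 0) + (if medP y z x then 1 else 0)
      + (if medP z x y then 1 else 0) : ℕ) = 1 := by
  unfold medP
  split_ifs <;> (try simp only [min_def, max_def] at *) <;> split_ifs at * <;> omega

end Perm
/-- the median condition for a permutation at the three last positions -/
def medQ (n : ℕ) (i0 i1 i2 : Fin n) (p : Equiv.Perm (Fin n)) : Prop :=
  medP ((p i0 : ℕ) + 1) ((p i1 : ℕ) + 1) ((p i2 : ℕ) + 1)

instance (n : ℕ) (i0 i1 i2 : Fin n) (p : Equiv.Perm (Fin n)) :
    Decidable (medQ n i0 i1 i2 p) := by unfold medQ; infer_instance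

theorem penultimate_entry_one_child_count' (m : ℕ) :
    (Finset.univ.filter (fun p : Equiv.Perm (Fin (m + 3)) =>
        (minmaxTree (permList (m + 3) p)).numChildren (entryAt (m + 3) p (m + 3 - 1)) = 1)).card =
      2 * (m + 3).factorial / 3 := by
  classical
  have h03 : (0 : ℕ) < m + 3 := by omega
  set i0 : Fin (m + 3) := ⟨m, by omega⟩ with hi0
  set i1 : Fin (m + 3) := ⟨m + 1, by omega⟩ with hi1
  set i2 : Fin (m + 3) := ⟨m + 2, by omega⟩ with hi2
  have h01 : i0 ≠ i1 := by simp [hi0, hi1, Fin.ext_iff]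
  have h02 : i0 ≠ i2 := by simp [hi0, hi2, Fin.ext_iff]
  have h12 : i1 ≠ i2 := by simp [hi1, hi2, Fin.ext_iff]
  have hlen : ∀ p : Equiv.Perm (Fin (m + 3)), (permList (m + 3) p).length = m + 3 := by
    intro p; simp [permList]
  have hgetD : ∀ (p : Equiv.Perm (Fin (m + 3))) (j : ℕ) (hj : j < m + 3),
      (permList (m + 3) p).getD j 0 = (p ⟨j, hj⟩ : ℕ) + 1 := by
    intro p j hj
    have hof := List.getElem_ofFn (f := fun i : Fin (m + 3) => (p i : ℕ) + 1) (i := j)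
      (by simp; omega)
    rw [permList, List.getD_eq_getElem _ _ (by simp; omega), hof]
  -- characterization via the key lemma
  have hchar : ∀ p : Equiv.Perm (Fin (m + 3)),
      (minmaxTree (permList (m + 3) p)).numChildren (entryAt (m + 3) p (m + 3 - 1)) =
        if medQ (m + 3) i0 i1 i2 p then 2 else 1 := by
    intro p
    have hnd : (permList (m + 3) p).Nodup := by
      rw [permList, List.nodup_ofFn]
      intro x y hxy
      simp only at hxy
      have : (p x : ℕ) = (p y : ℕ) := by omega
      exact p.injective (Fin.val_injective this)
    have hg0 : (permList (m + 3) p).getD m 0 = (p i0 : ℕ) + 1 := by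
      rw [hgetD p m (by omega)]
    have hg1 : (permList (m + 3) p).getD (m + 1) 0 = (p i1 : ℕ) + 1 := by
      rw [hgetD p (m + 1) (by omega)]
    have hg2 : (permList (m + 3) p).getD (m + 2) 0 = (p i2 : ℕ) + 1 := by
      rw [hgetD p (m + 2) (by omega)]
    have hd := list_decomp (l := permList (m + 3) p) (m := m) (hlen p)
    rw [hg0, hg1, hg2] at hd
    have hent : entryAt (m + 3) p (m + 3 - 1) = (p i1 : ℕ) + 1 := by
      rw [entryAt, (by omega : m + 3 - 1 - 1 = m + 1), hg1]
    have hu : ((permList (m + 3) p).take m).length ≤ m := by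
      rw [List.length_take]; omega
    have hnd' : (((permList (m + 3) p).take m) ++
        [(p i0 : ℕ) + 1, (p i1 : ℕ) + 1, (p i2 : ℕ) + 1]).Nodup := by
      rw [← hd]; exact hnd
    have hkey := key_lemma m ((permList (m + 3) p).take m) hu
      ((p i0 : ℕ) + 1) ((p i1 : ℕ) + 1) ((p i2 : ℕ) + 1) hnd'
    rw [← hd] at hkey
    rw [hent, hkey]
    rfl
  -- the 3-cycle on the last three positions
  set cyc : Equiv.Perm (Fin (m + 3)) := Equiv.swap i0 i1 * Equiv.swap i1 i2 with hcyc
  have hc0 : cyc i0 = i1 := by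
    rw [hcyc, Equiv.Perm.mul_apply, Equiv.swap_apply_of_ne_of_ne h01 h02,
      Equiv.swap_apply_left]
  have hc1 : cyc i1 = i2 := by
    rw [hcyc, Equiv.Perm.mul_apply, Equiv.swap_apply_left,
      Equiv.swap_apply_of_ne_of_ne (Ne.symm h02) (Ne.symm h12)]
  have hc2 : cyc i2 = i0 := by
    rw [hcyc, Equiv.Perm.mul_apply, Equiv.swap_apply_right, Equiv.swap_apply_right]
  -- the three rotation classes
  set S0 := Finset.univ.filter (fun p : Equiv.Perm (Fin (m + 3)) => medQ (m + 3) i0 i1 i2 p)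
    with hS0
  set S1 := Finset.univ.filter
    (fun p : Equiv.Perm (Fin (m + 3)) => medQ (m + 3) i0 i1 i2 (p * cyc)) with hS1
  set S2 := Finset.univ.filter
    (fun p : Equiv.Perm (Fin (m + 3)) => medQ (m + 3) i0 i1 i2 (p * cyc * cyc)) with hS2
  have hQc : ∀ p : Equiv.Perm (Fin (m + 3)), medQ (m + 3) i0 i1 i2 (p * cyc) =
      medP ((p i1 : ℕ) + 1) ((p i2 : ℕ) + 1) ((p i0 : ℕ) + 1) := by
    intro p
    show medP _ _ _ = _
    simp only [Equiv.Perm.mul_apply, hc0, hc1, hc2]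
  have hQcc : ∀ p : Equiv.Perm (Fin (m + 3)), medQ (m + 3) i0 i1 i2 (p * cyc * cyc) =
      medP ((p i2 : ℕ) + 1) ((p i0 : ℕ) + 1) ((p i1 : ℕ) + 1) := by
    intro p
    show medP _ _ _ = _
    simp only [Equiv.Perm.mul_apply, hc0, hc1, hc2]
  have hone : ∀ p : Equiv.Perm (Fin (m + 3)),
      ((if medQ (m + 3) i0 i1 i2 p then 1 else 0)
        + (if medQ (m + 3) i0 i1 i2 (p * cyc) then 1 else 0)
        + (if medQ (m + 3) i0 i1 i2 (p * cyc * cyc) then 1 else 0) : ℕ) = 1 := by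
    intro p
    have d01 : (p i0 : ℕ) + 1 ≠ (p i1 : ℕ) + 1 := by
      intro h
      exact h01 (p.injective (Fin.val_injective (by omega)))
    have d02 : (p i0 : ℕ) + 1 ≠ (p i2 : ℕ) + 1 := by
      intro h
      exact h02 (p.injective (Fin.val_injective (by omega)))
    have d12 : (p i1 : ℕ) + 1 ≠ (p i2 : ℕ) + 1 := by
      intro h
      exact h12 (p.injective (Fin.val_injective (by omega)))
    simp only [hQc p, hQcc p]
    simp only [medQ]
    exact exactly_one_med d01 d02 d12
  have hcard1 : S1.card = S0.card := by
    apply Finset.card_bij' (fun p _ => p * cyc) (fun q _ => q * cyc⁻¹)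
    · intro a ha
      simp only [hS0, hS1, Finset.mem_filter, Finset.mem_univ, true_and] at ha ⊢
      exact ha
    · intro a ha
      simp only [hS0, hS1, Finset.mem_filter, Finset.mem_univ, true_and,
        inv_mul_cancel_right] at ha ⊢
      exact ha
    · intro a _; exact mul_inv_cancel_right a cyc
    · intro a _; exact inv_mul_cancel_right a cyc
  have hcard2 : S2.card = S0.card := by
    apply Finset.card_bij' (fun p _ => p * cyc * cyc) (fun q _ => q * cyc⁻¹ * cyc⁻¹)
    · intro a ha
      simp only [hS0, hS2, Finset.mem_filter, Finset.mem_univ, true_and] at ha ⊢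
      exact ha
    · intro a ha
      simp only [hS0, hS2, Finset.mem_filter, Finset.mem_univ, true_and] at ha ⊢
      have : a * cyc⁻¹ * cyc⁻¹ * cyc * cyc = a := by group
      rw [this]
      exact ha
    · intro a _; group
    · intro a _; group
  have hsum : S0.card + S1.card + S2.card = (m + 3).factorial := by
    rw [hS0, hS1, hS2, Finset.card_filter, Finset.card_filter, Finset.card_filter,
      ← Finset.sum_add_distrib, ← Finset.sum_add_distrib]
    rw [Finset.sum_congr rfl (fun p _ => hone p), Finset.sum_const, Finset.card_univ,
      Fintype.card_perm, Fintype.card_fin, smul_eq_mul, mul_one]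
  have h3 : 3 * S0.card = (m + 3).factorial := by omega
  have hfe : (Finset.univ.filter (fun p : Equiv.Perm (Fin (m + 3)) =>
      (minmaxTree (permList (m + 3) p)).numChildren (entryAt (m + 3) p (m + 3 - 1)) = 1)) =
      Finset.univ.filter (fun p => ¬ medQ (m + 3) i0 i1 i2 p) := by
    apply Finset.filter_congr
    intro p _
    rw [hchar p]
    by_cases h : medQ (m + 3) i0 i1 i2 p <;> simp [h]
  rw [hfe, Finset.filter_not, Finset.card_sdiff_of_subset (Finset.filter_subset _ _),
    Finset.card_univ, Fintype.card_perm, Fintype.card_fin, ← hS0]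
  omega

/-- For `n ≥ 3`, the number of permutations `p` of `{1,…,n}` in
which the entry `p_{n-1}` has exactly one child in the minmax tree is `2·n!/3`. -/
theorem penultimate_entry_one_child_count (n : ℕ) (hn : 3 ≤ n) :
    (Finset.univ.filter (fun p : Equiv.Perm (Fin n) =>
        (minmaxTree (permList n p)).numChildren (entryAt n p (n - 1)) = 1)).card =
      2 * n.factorial / 3 := by
  obtain ⟨m, rfl⟩ : ∃ m, n = m + 3 := ⟨n - 3, by omega⟩
  exact penultimate_entry_one_child_count' m
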